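/- With M_{jk} := e_{jk} − e_{kj} in Mat(5,ℂ) and H₊ := −(i/2)(M₁₂ + M₃₄), H₋ := −(i/2)(M₁₂ − M₃₄), E₊ := (1/2)(−M₂₄ + iM₂₃ + iM₁₄ + M₁₃), E₋ := (1/2)(−M₂₄ − iM₂₃ + iM₁₄ − M₁₃), E₁ := (1/√2)(M₂₅ − iM₁₅), E₂ := (1/√2)(M₄₅ − iM₃₅), the following commutation relations hold: [E₁, E₂] = E₊, [E₂, E₋] = E₁, [H₊, E₁] = (1/2)E₁, [H₊, E₂] = (1/2)E₂, [H₋, E₁] = (1/2)E₁, [H₋, E₂] = −(1/2)E₂, [E₊, E₁] = 0, [E₊, E₂] = 0, [E₊, E₋] = 0, and [E₋, E₁] = 0. -/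

import Mathlib

set_option maxHeartbeats 1600000 in
/-- Normalized structure relations of the 6-dimensional carrier algebra `L⁽⁶⁾ ⊂ so(5)` in
its defining representation. -/
theorem so5_carrier_structure_relations :
    let M : Fin 5 → Fin 5 → Matrix (Fin 5) (Fin 5) ℂ :=
      fun j k => Matrix.single j k 1 - Matrix.single k j 1
    let Hp : Matrix (Fin 5) (Fin 5) ℂ := (-(Complex.I / 2)) • (M 0 1 + M 2 3)
    let Hm : Matrix (Fin 5) (Fin 5) ℂ := (-(Complex.I / 2)) • (M 0 1 - M 2 3)
    let Ep : Matrix (Fin 5) (Fin 5) ℂ :=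
      ((1 : ℂ) / 2) • (-(M 1 3) + Complex.I • M 1 2 + Complex.I • M 0 3 + M 0 2)
    let Em : Matrix (Fin 5) (Fin 5) ℂ :=
      ((1 : ℂ) / 2) • (-(M 1 3) - Complex.I • M 1 2 + Complex.I • M 0 3 - M 0 2)
    let E1 : Matrix (Fin 5) (Fin 5) ℂ :=
      ((1 : ℂ) / (Real.sqrt 2 : ℂ)) • (M 1 4 - Complex.I • M 0 4)
    let E2 : Matrix (Fin 5) (Fin 5) ℂ :=
      ((1 : ℂ) / (Real.sqrt 2 : ℂ)) • (M 3 4 - Complex.I • M 2 4)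
    E1 * E2 - E2 * E1 = Ep ∧
    E2 * Em - Em * E2 = E1 ∧
    Hp * E1 - E1 * Hp = ((1 : ℂ) / 2) • E1 ∧
    Hp * E2 - E2 * Hp = ((1 : ℂ) / 2) • E2 ∧
    Hm * E1 - E1 * Hm = ((1 : ℂ) / 2) • E1 ∧
    Hm * E2 - E2 * Hm = -(((1 : ℂ) / 2) • E2) ∧
    Ep * E1 - E1 * Ep = 0 ∧
    Ep * E2 - E2 * Ep = 0 ∧
    Ep * Em - Em * Ep = 0 ∧
    Em * E1 - E1 * Em = 0 := by
  intro M Hp Hm Ep Em E1 E2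
  have hs : ((Real.sqrt 2 : ℝ) : ℂ) * ((Real.sqrt 2 : ℝ) : ℂ) = 2 := by
    norm_cast; exact Real.mul_self_sqrt (by norm_num)
  have hinv : (((Real.sqrt 2 : ℝ) : ℂ))⁻¹ ^ 2 = 1 / 2 := by
    rw [sq, ← mul_inv, hs]; norm_num
  have h0 : ((Real.sqrt 2 : ℝ) : ℂ) ≠ 0 := by
    intro h; rw [h, mul_zero] at hs; exact two_ne_zero hs.symm
  refine ⟨?_, ?_, ?_, ?_, ?_, ?_, ?_, ?_, ?_, ?_⟩ <;>
  · simp only [M, Hp, Hm, Ep, Em, E1, E2, smul_sub, smul_add, smul_smul, sub_mul, mul_sub,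
      add_mul, mul_add, Matrix.smul_mul, Matrix.mul_smul, Matrix.neg_mul, Matrix.mul_neg,
      neg_smul, smul_neg, Matrix.single_mul_single_same, Matrix.single_mul_single_of_ne,
      ne_eq, Fin.reduceEq, not_false_iff, smul_zero, zero_smul, sub_zero, zero_sub, neg_neg,
      one_mul, mul_one]
    match_scalars
    all_goals try ring
    all_goals (try ring_nf; try simp only [hinv, Complex.I_sq]; try ring; try norm_num)
    all_goals (simp only [inv_pow, ← Complex.ofReal_pow, Real.sq_sqrt zero_le_two, Complex.I_sq]; push_cast; ring)
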